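/- Let k be a commutative ring and let C be an EI category with object set ℕ satisfying the standing conditions, and assume C is locally Noetherian over k. Let V be a finitely generated C-module. Then V is an injective object of the category of all C-modules if and only if V is an injective object of the full subcategory of finitely generated C-modules. -/

import Mathlib

open CategoryTheory CategoryTheory.Limits

attribute [local instance] CategoryTheory.Abelian.hasFiniteBiproducts

section EI

variable [Category.{0} ℕ]

/-- The standing conditions on the category `C` (whose set of objects is `ℕ`):
every endomorphism is an isomorphism (`C` is an EI category); `C(m,n) = ∅` when
`m > n`; `C(m,n)` is a nonempty finite set when `m ≤ n`; and for `m ≤ l ≤ n` the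
composition map `C(l,n) × C(m,l) → C(m,n)` is surjective. -/
def EIStanding : Prop :=
  (∀ (n : ℕ) (f : n ⟶ n), IsIso f) ∧
  (∀ ⦃m n : ℕ⦄, n < m → IsEmpty (m ⟶ n)) ∧
  (∀ ⦃m n : ℕ⦄, m ≤ n → Nonempty (m ⟶ n)) ∧
  (∀ m n : ℕ, Finite (m ⟶ n)) ∧
  (∀ ⦃m l n : ℕ⦄, m ≤ l → l ≤ n → ∀ h : m ⟶ n, ∃ (g : m ⟶ l) (f : l ⟶ n), g ≫ f = h)

/-- The free `C`-module `kC e_n`, sending `m` to the free `k`-module on the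
hom-set `C(n, m)`. -/
noncomputable def EIfree (k : Type) [CommRing k] (n : ℕ) : ℕ ⥤ ModuleCat k :=
  coyoneda.obj (Opposite.op n) ⋙ ModuleCat.free k

/-- A `C`-module is finitely generated if it admits an epimorphism from a finite
direct sum `⨁ᵢ kC e_{nᵢ}` of free modules. -/
noncomputable def EIFinGen (k : Type) [CommRing k] (V : ℕ ⥤ ModuleCat k) : Prop :=
  ∃ (r : ℕ) (a : Fin r → ℕ) (p : (⨁ fun i : Fin r => EIfree k (a i)) ⟶ V), Epi p

/-- `C` is locally Noetherian over `k`: every subfunctor of a finitely generated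
`C`-module is finitely generated, i.e. the source of any monomorphism into a
finitely generated `C`-module is finitely generated. -/
noncomputable def EILocNoeth (k : Type) [CommRing k] : Prop :=
  ∀ (V W : ℕ ⥤ ModuleCat k) (f : W ⟶ V), Mono f → EIFinGen k V → EIFinGen k W

/-- The full subcategory `C_n` of `C` on the objects `{0, 1, …, n}`. -/
abbrev EIsub (n : ℕ) := ObjectProperty.FullSubcategory (fun m : ℕ => m ≤ n)

/-- A `C`-module (resp. `C_n`-module) is finite dimensional over a field `k` if
all its values are finite dimensional and all but finitely many vanish. -/
def EIFinDim (k : Type) [Field k] (V : ℕ ⥤ ModuleCat k) : Prop :=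
  (∀ m : ℕ, Module.Finite k (V.obj m)) ∧ ∃ N : ℕ, ∀ m : ℕ, N < m → IsZero (V.obj m)

/-- `C` satisfies the transitivity condition: for each `n`, the group `C(n+1,n+1)`
acts transitively on `C(n,n+1)` by postcomposition. -/
def EITransitive : Prop :=
  ∀ (n : ℕ) (f g : (n : ℕ) ⟶ (n + 1 : ℕ)), ∃ h : (n + 1 : ℕ) ⟶ (n + 1 : ℕ), f ≫ h = g

/-- `0` is an initial object of `C`: `C(0,n)` is a singleton for every `n`. -/
def EIInitialZero : Prop :=
  ∀ n : ℕ, Nonempty ((0 : ℕ) ⟶ n) ∧ Subsingleton ((0 : ℕ) ⟶ n)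

end EI

namespace EIP

variable [Category.{0} ℕ] {k : Type} [CommRing k]

/-- A subfunctor of a `C`-module `Y`, given by a compatible family of submodules. -/
structure SubF (Y : ℕ ⥤ ModuleCat k) where
  S : ∀ n : ℕ, Submodule k (Y.obj n)
  closed : ∀ {m n : ℕ} (h : m ⟶ n) {x : Y.obj m}, x ∈ S m → (Y.map h) x ∈ S n

variable {Y : ℕ ⥤ ModuleCat k}

/-- The functor associated to a subfunctor datum. -/
noncomputable abbrev SubF.toFunctor (T : SubF Y) : ℕ ⥤ ModuleCat k where
  obj n := ModuleCat.of k (T.S n)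
  map {m n} h := ModuleCat.ofHom ((Y.map h).hom.restrict (fun x hx => T.closed h hx))
  map_id n := by
    refine ModuleCat.hom_ext (LinearMap.ext fun x => Subtype.ext ?_)
    show (Y.map (𝟙 n)) x.1 = x.1
    rw [Y.map_id]; rfl
  map_comp {m l n} h h' := by
    refine ModuleCat.hom_ext (LinearMap.ext fun x => Subtype.ext ?_)
    show (Y.map (h ≫ h')) x.1 = (Y.map h') ((Y.map h) x.1)
    rw [Y.map_comp]; rfl

lemma SubF.toFunctor_map (T : SubF Y) {m n : ℕ} (h : m ⟶ n) (x : T.toFunctor.obj m) :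
    T.toFunctor.map h x = ⟨Y.map h x.1, T.closed h x.2⟩ := rfl

/-- Intersection of subfunctors. -/
def SubF.inf (A B : SubF Y) : SubF Y where
  S n := A.S n ⊓ B.S n
  closed := fun {m n} h {x} hx => ⟨A.closed h hx.1, B.closed h hx.2⟩

/-- Inclusion of the intersection into the second factor. -/
noncomputable def SubF.infIncl₂ (A B : SubF Y) : (A.inf B).toFunctor ⟶ B.toFunctor where
  app n := ModuleCat.ofHom (Submodule.inclusion (p := (A.inf B).S n) (p' := B.S n) (fun x hx => hx.2))
  naturality {m n} h := by
    refine ModuleCat.hom_ext (LinearMap.ext fun x => Subtype.ext ?_)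
    rfl

instance (A B : SubF Y) : Mono (A.infIncl₂ B) := by
  have : ∀ n : ℕ, Mono ((A.infIncl₂ B).app n) := fun n =>
    (ModuleCat.mono_iff_injective _).2 (Submodule.inclusion_injective (p := (A.inf B).S n) (p' := B.S n) (fun x hx => hx.2))
  exact NatTrans.mono_of_mono_app _


section Span

variable {n₀ : ℕ} (y : Y.obj n₀)

/-- The cyclic subfunctor of `Y` generated by `y : Y.obj n₀`. -/
def spanSub (y : Y.obj n₀) : SubF Y where
  S m := Submodule.span k (Set.range fun h : n₀ ⟶ m => (Y.map h) y)
  closed := fun {m n} h {x} hx => by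
    have hle : Submodule.map (Y.map h).hom
        (Submodule.span k (Set.range fun g : n₀ ⟶ m => (Y.map g) y)) ≤
        Submodule.span k (Set.range fun g : n₀ ⟶ n => (Y.map g) y) := by
      rw [Submodule.map_span]
      refine Submodule.span_le.2 ?_
      rintro _ ⟨_, ⟨g, rfl⟩, rfl⟩
      refine Submodule.subset_span ⟨g ≫ h, ?_⟩
      show (Y.map (g ≫ h)) y = (Y.map h) ((Y.map g) y)
      rw [Y.map_comp]; rfl
    exact hle (Submodule.mem_map_of_mem hx)

/-- The tautological morphism from the free module onto the cyclic subfunctor. -/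
noncomputable def toSpan : EIfree k n₀ ⟶ (spanSub y).toFunctor where
  app m := ModuleCat.freeDesc
    (TypeCat.ofHom fun h : n₀ ⟶ m =>
      (⟨(Y.map h) y, Submodule.subset_span ⟨h, rfl⟩⟩ : (spanSub y).S m))
  naturality {m m'} h' := by
    refine ModuleCat.free_hom_ext fun g => ?_
    have h1 : (EIfree k n₀).map h' (ModuleCat.freeMk g) = ModuleCat.freeMk (g ≫ h') :=
      ModuleCat.free_map_apply ((coyoneda.obj (Opposite.op n₀)).map h') g
    show (ModuleCat.freeDesc (TypeCat.ofHom fun h : n₀ ⟶ m' =>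
        (⟨(Y.map h) y, Submodule.subset_span ⟨h, rfl⟩⟩ : (spanSub y).S m')))
        ((EIfree k n₀).map h' (ModuleCat.freeMk g))
      = ((spanSub y).toFunctor.map h')
        ((ModuleCat.freeDesc (TypeCat.ofHom fun h : n₀ ⟶ m =>
          (⟨(Y.map h) y, Submodule.subset_span ⟨h, rfl⟩⟩ : (spanSub y).S m)))
          (ModuleCat.freeMk g))
    rw [h1, ModuleCat.freeDesc_apply, ModuleCat.freeDesc_apply]
    refine Subtype.ext ?_
    show (Y.map (g ≫ h')) y = (Y.map h') ((Y.map g) y)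
    rw [Y.map_comp]; rfl

lemma toSpan_surjective (m : ℕ) : Function.Surjective ((toSpan y).app m) := by
  rintro ⟨z, hz⟩
  rw [show (spanSub y).S m = Submodule.span k (Set.range fun h : n₀ ⟶ m => (Y.map h) y)
    from rfl, Finsupp.mem_span_range_iff_exists_finsupp] at hz
  obtain ⟨c, hc⟩ := hz
  refine ⟨c, Subtype.ext ?_⟩
  have : (((spanSub y).S m).subtype) ((toSpan y).app m c)
      = c.sum fun h a => a • (Y.map h) y := by
    show (((spanSub y).S m).subtype) ((Finsupp.lift _ k (n₀ ⟶ m) _) c) = _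
    erw [Finsupp.lift_apply, map_finsuppSum]
    rfl
  exact this.trans hc

lemma spanSub_fg : EIFinGen k (spanSub y).toFunctor := by
  have h1 : ∀ m : ℕ, Epi ((toSpan y).app m) := fun m =>
    (ModuleCat.epi_iff_surjective _).2 (toSpan_surjective y m)
  have hepi : Epi (toSpan y) := NatTrans.epi_of_epi_app _
  refine ⟨1, fun _ => n₀, biproduct.desc (fun _ => toSpan y), ?_⟩
  have h0 : biproduct.ι (fun _ : Fin 1 => EIfree k n₀) 0 ≫
      biproduct.desc (fun _ => toSpan y) = toSpan y := biproduct.ι_desc _ _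
  have : Epi (biproduct.ι (fun _ : Fin 1 => EIfree k n₀) 0 ≫
      biproduct.desc (fun _ => toSpan y)) := by rw [h0]; exact hepi
  exact epi_of_epi (biproduct.ι (fun _ : Fin 1 => EIfree k n₀) 0) _

lemma mem_spanSub_self : y ∈ (spanSub y).S n₀ := by
  refine Submodule.subset_span ⟨𝟙 n₀, ?_⟩
  show (Y.map (𝟙 n₀)) y = y
  rw [Y.map_id]; rfl

end Span

section PExt

variable {X V : ℕ ⥤ ModuleCat k}

/-- Naturality of a natural transformation, applied elementwise. -/
lemma nat_app {F G : ℕ ⥤ ModuleCat k} (t : F ⟶ G) {m n : ℕ} (h : m ⟶ n) (x : F.obj m) :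
    t.app n (F.map h x) = G.map h (t.app m x) :=
  DFunLike.congr_fun (congrArg ModuleCat.Hom.hom (t.naturality h)) x

/-- A partial extension of `f : X ⟶ V` along `i : X ⟶ Y`: a subfunctor of `Y`
containing the image of `i`, with a compatible family of maps to `V`. -/
structure PExt (i : X ⟶ Y) (f : X ⟶ V) where
  S : ∀ n : ℕ, Submodule k (Y.obj n)
  closed : ∀ {m n : ℕ} (h : m ⟶ n) {x : Y.obj m}, x ∈ S m → (Y.map h) x ∈ S n
  g : ∀ n : ℕ, S n →ₗ[k] V.obj n
  nat : ∀ {m n : ℕ} (h : m ⟶ n) (x : Y.obj m) (hx : x ∈ S m),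
    g n ⟨(Y.map h) x, closed h hx⟩ = (V.map h) (g m ⟨x, hx⟩)
  cont : ∀ (n : ℕ) (x : X.obj n), i.app n x ∈ S n
  compat : ∀ (n : ℕ) (x : X.obj n), g n ⟨i.app n x, cont n x⟩ = f.app n x

variable {i : X ⟶ Y} {f : X ⟶ V}

/-- The subfunctor datum of a partial extension. -/
def PExt.toSubF (p : PExt i f) : SubF Y := ⟨p.S, fun {m n} h {x} hx => p.closed h hx⟩

instance : Preorder (PExt i f) where
  le p q := ∃ hle : ∀ n, p.S n ≤ q.S n,
    ∀ (n : ℕ) (x : Y.obj n) (hx : x ∈ p.S n), q.g n ⟨x, hle n hx⟩ = p.g n ⟨x, hx⟩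
  le_refl p := ⟨fun n => le_refl _, fun n x hx => rfl⟩
  le_trans p q r := fun ⟨h1, h2⟩ ⟨h3, h4⟩ =>
    ⟨fun n => (h1 n).trans (h3 n), fun n x hx => (h4 n x _).trans (h2 n x hx)⟩

/-- The base partial extension, on the image of `i`. -/
noncomputable def basePExt (hi : ∀ n : ℕ, Function.Injective (i.app n)) :
    PExt i f := by
  classical
  have hex : ∀ (n : ℕ) (z : LinearMap.range (i.app n).hom), ∃ w : X.obj n, i.app n w = z.1 :=
    fun n z => z.2
  -- the chosen preimage
  let w : ∀ (n : ℕ) (z : LinearMap.range (i.app n).hom), X.obj n :=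
    fun n z => (hex n z).choose
  have hw : ∀ (n : ℕ) (z : LinearMap.range (i.app n).hom), i.app n (w n z) = z.1 :=
    fun n z => (hex n z).choose_spec
  have hwd : ∀ (n : ℕ) (z : LinearMap.range (i.app n).hom) (u : X.obj n),
      i.app n u = z.1 → w n z = u := fun n z u hu => hi n ((hw n z).trans hu.symm)
  refine
    { S := fun n => LinearMap.range (i.app n).hom
      closed := fun {m n} h {x} hx => ?_
      g := fun n =>
        { toFun := fun z => f.app n (w n z)
          map_add' := fun a b => ?_
          map_smul' := fun c a => ?_ }
      nat := fun {m n} h x hx => ?_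
      cont := fun n x => ⟨x, rfl⟩
      compat := fun n x => ?_ }
  · obtain ⟨u, hu⟩ := hx
    exact ⟨X.map h u, by rw [nat_app i h u, hu]⟩
  · have hadd : w n (a + b) = w n a + w n b :=
      hwd n (a + b) (w n a + w n b) (by rw [map_add, hw n a, hw n b]; rfl)
    show f.app n (w n (a + b)) = f.app n (w n a) + f.app n (w n b)
    rw [hadd, map_add]
  · have hsmul : w n (c • a) = c • w n a :=
      hwd n (c • a) (c • w n a) (by rw [map_smul, hw n a]; rfl)
    show f.app n (w n (c • a)) = c • f.app n (w n a)
    rw [hsmul, map_smul]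
  · have h1 : ∀ z : LinearMap.range (i.app n).hom, z.1 = (Y.map h) x →
        f.app n (w n z) = (V.map h) (f.app m (w m ⟨x, hx⟩)) := by
      intro z hz
      have h2 : w n z = X.map h (w m ⟨x, hx⟩) := by
        refine hwd _ _ _ ?_
        rw [nat_app i h, hw]
        exact hz.symm
      rw [h2, nat_app f h]
    exact h1 _ rfl
  · have h2 : w n ⟨i.app n x, ⟨x, rfl⟩⟩ = x := hwd n ⟨i.app n x, ⟨x, rfl⟩⟩ x rfl
    exact congrArg (f.app n) (hwd n _ x rfl)

/-- Upper bound for a nonempty chain of partial extensions. -/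
lemma chain_ub (c : Set (PExt i f)) (hc : IsChain (· ≤ ·) c) (p₀ : PExt i f)
    (hp₀ : p₀ ∈ c) : ∃ ub : PExt i f, ∀ p ∈ c, p ≤ ub := by
  classical
  -- the supremum submodules
  let S : ∀ n : ℕ, Submodule k (Y.obj n) := fun n => sSup ((fun p : PExt i f => p.S n) '' c)
  have hdir : ∀ n : ℕ, DirectedOn (· ≤ ·) ((fun p : PExt i f => p.S n) '' c) := by
    rintro n _ ⟨p, hp, rfl⟩ _ ⟨q, hq, rfl⟩
    rcases hc.total hp hq with hle | hle
    · exact ⟨q.S n, ⟨q, hq, rfl⟩, hle.1 n, le_refl _⟩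
    · exact ⟨p.S n, ⟨p, hp, rfl⟩, le_refl _, hle.1 n⟩
  have hmem : ∀ (n : ℕ) (x : Y.obj n), x ∈ S n ↔ ∃ p ∈ c, x ∈ p.S n := by
    intro n x
    rw [Submodule.mem_sSup_of_directed (Set.Nonempty.image _ ⟨p₀, hp₀⟩) (hdir n)]
    constructor
    · rintro ⟨_, ⟨p, hp, rfl⟩, hx⟩; exact ⟨p, hp, hx⟩
    · rintro ⟨p, hp, hx⟩; exact ⟨p.S n, ⟨p, hp, rfl⟩, hx⟩
  -- choice of a member of the chain containing a given element
  have hex : ∀ (n : ℕ) (z : S n), ∃ p ∈ c, z.1 ∈ p.S n := fun n z => (hmem n z.1).1 z.2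
  let P : ∀ (n : ℕ) (z : S n), PExt i f := fun n z => (hex n z).choose
  have hP : ∀ (n : ℕ) (z : S n), (P n z) ∈ c ∧ z.1 ∈ (P n z).S n := fun n z =>
    ⟨(hex n z).choose_spec.1, (hex n z).choose_spec.2⟩
  let gf : ∀ (n : ℕ) (z : S n), V.obj n := fun n z => (P n z).g n ⟨z.1, (hP n z).2⟩
  -- independence of the choice
  have hwd : ∀ (n : ℕ) (z : S n) (q : PExt i f), q ∈ c → ∀ hq : z.1 ∈ q.S n,
      gf n z = q.g n ⟨z.1, hq⟩ := by
    intro n z q hq hzq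
    rcases hc.total (hP n z).1 hq with hle | hle
    · exact (hle.2 n z.1 (hP n z).2).symm
    · exact hle.2 n z.1 hzq
  refine ⟨{ S := S
            closed := fun {m n} h {x} hx => ?_
            g := fun n =>
              { toFun := gf n
                map_add' := fun a b => ?_
                map_smul' := fun r a => ?_ }
            nat := fun {m n} h x hx => ?_
            cont := fun n x => ?_
            compat := fun n x => ?_ }, ?_⟩
  · obtain ⟨p, hp, hxp⟩ := (hmem m x).1 hx
    exact (hmem n _).2 ⟨p, hp, p.closed h hxp⟩
  · -- additivity
    obtain ⟨p, hp, hap⟩ := hex n a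
    obtain ⟨q, hq, hbq⟩ := hex n b
    rcases hc.total hp hq with hle | hle
    · have ha' : a.1 ∈ q.S n := hle.1 n hap
      have hab : a.1 + b.1 ∈ q.S n := add_mem ha' hbq
      show gf n (a + b) = gf n a + gf n b
      rw [hwd n (a + b) q hq hab, hwd n a q hq ha', hwd n b q hq hbq, ← map_add]
      rfl
    · have hb' : b.1 ∈ p.S n := hle.1 n hbq
      have hab : a.1 + b.1 ∈ p.S n := add_mem hap hb'
      show gf n (a + b) = gf n a + gf n b
      rw [hwd n (a + b) p hp hab, hwd n a p hp hap, hwd n b p hp hb', ← map_add]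
      rfl
  · obtain ⟨p, hp, hap⟩ := hex n a
    have hra : r • a.1 ∈ p.S n := Submodule.smul_mem _ _ hap
    show gf n (r • a) = r • gf n a
    rw [hwd n (r • a) p hp hra, hwd n a p hp hap, ← map_smul]
    rfl
  · -- naturality
    obtain ⟨p, hp, hxp⟩ := (hmem m x).1 hx
    have h1 : (Y.map h) x ∈ p.S n := p.closed h hxp
    show gf n ⟨(Y.map h) x, _⟩ = (V.map h) (gf m ⟨x, hx⟩)
    rw [hwd n ⟨(Y.map h) x, _⟩ p hp h1, hwd m ⟨x, hx⟩ p hp hxp, p.nat h x hxp]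
  · exact (hmem n _).2 ⟨p₀, hp₀, p₀.cont n x⟩
  · show gf n ⟨i.app n x, _⟩ = f.app n x
    rw [hwd n ⟨i.app n x, _⟩ p₀ hp₀ (p₀.cont n x), p₀.compat n x]
  · -- upper bound
    intro p hp
    refine ⟨fun n => fun x hx => (hmem n x).2 ⟨p, hp, hx⟩, fun n x hx => ?_⟩
    exact hwd n ⟨x, _⟩ p hp hx

section Step

variable (p : PExt i f) (T : SubF Y) (e : T.toFunctor ⟶ V)

/-- The candidate extension of `p.g` to `p.S ⊔ T.S`, built from `e` by choosing
decompositions. -/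
noncomputable def supFun (n : ℕ) (z : (p.S n ⊔ T.S n : Submodule k (Y.obj n))) :
    V.obj n :=
  p.g n ⟨(Submodule.mem_sup.1 z.2).choose, (Submodule.mem_sup.1 z.2).choose_spec.1⟩ +
    e.app n ⟨(Submodule.mem_sup.1 z.2).choose_spec.2.choose,
      (Submodule.mem_sup.1 z.2).choose_spec.2.choose_spec.1⟩

/-- Well-definedness of `supFun`, given that `e` agrees with `p.g` on the
intersection. -/
lemma supFun_eq
    (agree : ∀ (n : ℕ) (x : Y.obj n) (hx1 : x ∈ p.S n) (hx2 : x ∈ T.S n),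
      e.app n ⟨x, hx2⟩ = p.g n ⟨x, hx1⟩)
    (n : ℕ) (z : (p.S n ⊔ T.S n : Submodule k (Y.obj n)))
    (s t : Y.obj n) (hs : s ∈ p.S n) (ht : t ∈ T.S n) (hsum : s + t = z.1) :
    supFun p T e n z = p.g n ⟨s, hs⟩ + e.app n ⟨t, ht⟩ := by
  set s₀ := (Submodule.mem_sup.1 z.2).choose with hs₀def
  have hs₀ : s₀ ∈ p.S n := (Submodule.mem_sup.1 z.2).choose_spec.1
  set t₀ := (Submodule.mem_sup.1 z.2).choose_spec.2.choose with ht₀def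
  have ht₀ : t₀ ∈ T.S n := (Submodule.mem_sup.1 z.2).choose_spec.2.choose_spec.1
  have hsum₀ : s₀ + t₀ = z.1 := (Submodule.mem_sup.1 z.2).choose_spec.2.choose_spec.2
  have hd : s₀ - s = t - t₀ := by
    rw [sub_eq_sub_iff_add_eq_add, hsum₀, add_comm t s, hsum]
  have hmemd : s₀ - s ∈ p.S n := sub_mem hs₀ hs
  have hmemd' : s₀ - s ∈ T.S n := by rw [hd]; exact sub_mem ht ht₀
  have key : p.g n ⟨s₀, hs₀⟩ - p.g n ⟨s, hs⟩ = e.app n ⟨t, ht⟩ - e.app n ⟨t₀, ht₀⟩ := by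
    rw [← map_sub, ← map_sub]
    have h1 : (⟨s₀, hs₀⟩ - ⟨s, hs⟩ : p.S n) = ⟨s₀ - s, hmemd⟩ := rfl
    have h2 : (⟨t, ht⟩ - ⟨t₀, ht₀⟩ : T.S n) = ⟨t - t₀, sub_mem ht ht₀⟩ := rfl
    have h3 : (⟨t - t₀, sub_mem ht ht₀⟩ : T.S n) = ⟨s₀ - s, hmemd'⟩ := Subtype.ext hd.symm
    rw [h1, h2, h3]
    exact (agree n (s₀ - s) hmemd hmemd').symm
  have key2 : p.g n ⟨s₀, hs₀⟩ + e.app n ⟨t₀, ht₀⟩ = e.app n ⟨t, ht⟩ + p.g n ⟨s, hs⟩ :=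
    sub_eq_sub_iff_add_eq_add.1 key
  show p.g n ⟨s₀, hs₀⟩ + e.app n ⟨t₀, ht₀⟩ = _
  rw [key2, add_comm]

set_option maxHeartbeats 1000000 in
/-- The extension step: any partial extension can be extended to cover a given
element `y`, using injectivity of `V` relative to finitely generated modules. -/
lemma step (hN : EILocNoeth k) (hfg : EIFinGen k V)
    (hinj : Injective (⟨V, hfg⟩ : ObjectProperty.FullSubcategory (EIFinGen k)))
    (p : PExt i f) {n₀ : ℕ} (y : Y.obj n₀) :
    ∃ q : PExt i f, p ≤ q ∧ y ∈ q.S n₀ := by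
  classical
  set T : SubF Y := spanSub y with hT
  set W : SubF Y := (p.toSubF).inf T with hW
  -- the map from the intersection to `V` induced by `p.g`
  let gW : W.toFunctor ⟶ V :=
    { app := fun n => ModuleCat.ofHom ((p.g n).comp (Submodule.inclusion (p := W.S n) (p' := p.S n) (fun x hx => hx.1)))
      naturality := fun {m n} h => by
        refine ModuleCat.hom_ext (LinearMap.ext fun x => ?_)
        exact p.nat h x.1 x.2.1 }
  have fgT : EIFinGen k T.toFunctor := spanSub_fg y
  have fgW : EIFinGen k W.toFunctor :=
    hN T.toFunctor W.toFunctor (SubF.infIncl₂ p.toSubF T) inferInstance fgT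
  let Wo : ObjectProperty.FullSubcategory (EIFinGen k) := ⟨W.toFunctor, fgW⟩
  let To : ObjectProperty.FullSubcategory (EIFinGen k) := ⟨T.toFunctor, fgT⟩
  haveI hrefl : Functor.ReflectsMonomorphisms (ObjectProperty.ι (EIFinGen k)) :=
    Functor.reflectsMonomorphisms_of_faithful _
  have hmono : Mono (X := Wo) (Y := To) (ObjectProperty.homMk (SubF.infIncl₂ p.toSubF T)) := by
    have h1 : Mono ((ObjectProperty.ι (EIFinGen k)).map
        (X := Wo) (Y := To) (ObjectProperty.homMk (SubF.infIncl₂ p.toSubF T))) := by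
      show Mono (SubF.infIncl₂ p.toSubF T); infer_instance
    exact (ObjectProperty.ι (EIFinGen k)).mono_of_mono_map h1
  haveI := hmono
  obtain ⟨e₀, he⟩ := hinj.factors
    (X := Wo) (Y := To) (show Wo ⟶ ⟨V, hfg⟩ from ObjectProperty.homMk gW)
    (show Wo ⟶ To from ObjectProperty.homMk (SubF.infIncl₂ p.toSubF T))
  let e : T.toFunctor ⟶ V := e₀.hom
  have he' : SubF.infIncl₂ p.toSubF T ≫ (e : T.toFunctor ⟶ V) = gW := congrArg (fun t => t.hom) he
  have agree : ∀ (n : ℕ) (x : Y.obj n) (hx1 : x ∈ p.S n) (hx2 : x ∈ T.S n),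
      (e : T.toFunctor ⟶ V).app n ⟨x, hx2⟩ = p.g n ⟨x, hx1⟩ := by
    intro n x hx1 hx2
    exact DFunLike.congr_fun
      (congrArg (fun t : W.toFunctor ⟶ V => (t.app n).hom) he') ⟨x, ⟨hx1, hx2⟩⟩
  have hwd := supFun_eq p T e agree
  refine ⟨{ S := fun n => p.S n ⊔ T.S n
            closed := fun {m n} h {x} hx => ?_
            g := fun n =>
              { toFun := supFun p T e n
                map_add' := fun a b => ?_
                map_smul' := fun r a => ?_ }
            nat := fun {m n} h x hx => ?_
            cont := fun n x => Submodule.mem_sup_left (p.cont n x)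
            compat := fun n x => ?_ }, ⟨fun n => le_sup_left, fun n x hx => ?_⟩,
    Submodule.mem_sup_right (mem_spanSub_self y)⟩
  · obtain ⟨s, hs, t, ht, hsum⟩ := Submodule.mem_sup.1 hx
    refine Submodule.mem_sup.2 ⟨(Y.map h) s, p.closed h hs, (Y.map h) t, T.closed h ht, ?_⟩
    rw [← map_add, hsum]
  · obtain ⟨sa, hsa, ta, hta, ha⟩ := Submodule.mem_sup.1 a.2
    obtain ⟨sb, hsb, tb, htb, hb⟩ := Submodule.mem_sup.1 b.2
    show supFun p T e n (a + b) = supFun p T e n a + supFun p T e n b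
    rw [hwd n (a + b) (sa + sb) (ta + tb) (add_mem hsa hsb) (add_mem hta htb)
        (by show sa + sb + (ta + tb) = a.1 + b.1; rw [add_add_add_comm, ha, hb]),
      hwd n a sa ta hsa hta ha, hwd n b sb tb hsb htb hb]
    have h1 : (⟨sa + sb, add_mem hsa hsb⟩ : p.S n) = ⟨sa, hsa⟩ + ⟨sb, hsb⟩ := rfl
    have h2 : (⟨ta + tb, add_mem hta htb⟩ : T.S n) = ⟨ta, hta⟩ + ⟨tb, htb⟩ := rfl
    rw [h1, h2, map_add, map_add]
    abel
  · obtain ⟨sa, hsa, ta, hta, ha⟩ := Submodule.mem_sup.1 a.2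
    show supFun p T e n (r • a) = r • supFun p T e n a
    rw [hwd n (r • a) (r • sa) (r • ta) (Submodule.smul_mem _ _ hsa)
        (Submodule.smul_mem _ _ hta)
        (by show r • sa + r • ta = r • a.1; rw [← smul_add, ha]),
      hwd n a sa ta hsa hta ha]
    have h1 : (⟨r • sa, Submodule.smul_mem _ _ hsa⟩ : p.S n) = r • ⟨sa, hsa⟩ := rfl
    have h2 : (⟨r • ta, Submodule.smul_mem _ _ hta⟩ : T.S n) = r • ⟨ta, hta⟩ := rfl
    rw [h1, h2, map_smul, map_smul, smul_add]
  · obtain ⟨s, hs, t, ht, hsum⟩ := Submodule.mem_sup.1 hx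
    show supFun p T e n ⟨(Y.map h) x, _⟩ = (V.map h) (supFun p T e m ⟨x, hx⟩)
    rw [hwd n ⟨(Y.map h) x, _⟩ ((Y.map h) s) ((Y.map h) t) (p.closed h hs)
        (T.closed h ht) (by rw [← map_add]; exact congrArg _ hsum),
      hwd m ⟨x, hx⟩ s t hs ht hsum, map_add, p.nat h s hs]
    have h2 : (e : T.toFunctor ⟶ V).app n ⟨(Y.map h) t, T.closed h ht⟩ =
        (V.map h) ((e : T.toFunctor ⟶ V).app m ⟨t, ht⟩) := nat_app e h ⟨t, ht⟩
    rw [h2]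
  · show supFun p T e n ⟨i.app n x, _⟩ = f.app n x
    rw [hwd n ⟨i.app n x, _⟩ (i.app n x) 0 (p.cont n x) (zero_mem _) (add_zero _),
      p.compat n x]
    have h1 : ((⟨0, zero_mem _⟩ : T.S n)) = 0 := rfl
    rw [h1, map_zero, add_zero]
  · show supFun p T e n ⟨x, _⟩ = p.g n ⟨x, hx⟩
    rw [hwd n ⟨x, _⟩ x 0 hx (zero_mem _) (add_zero _)]
    have h1 : ((⟨0, zero_mem _⟩ : T.S n)) = 0 := rfl
    rw [h1, map_zero, add_zero]

end Step

end PExt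

section Main

variable {V : ℕ ⥤ ModuleCat k}

/-- If `V` is injective relative to finitely generated modules, it is injective. -/
lemma injective_of_fg_injective (hN : EILocNoeth k) (hfg : EIFinGen k V)
    (hinj : Injective (⟨V, hfg⟩ : ObjectProperty.FullSubcategory (EIFinGen k))) :
    Injective V := by
  constructor
  intro A B g u hu
  have hi : ∀ n : ℕ, Function.Injective (u.app n) := fun n =>
    (ModuleCat.mono_iff_injective (u.app n)).1 inferInstance
  obtain ⟨p, hmax⟩ := zorn_le (α := PExt u g) (fun c hc => by
    rcases c.eq_empty_or_nonempty with rfl | ⟨p₀, hp₀⟩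
    · exact ⟨basePExt hi, by simp [upperBounds]⟩
    · obtain ⟨ub, hub⟩ := chain_ub c hc p₀ hp₀
      exact ⟨ub, fun p hp => hub p hp⟩)
  have htop : ∀ (n : ℕ) (z : B.obj n), z ∈ p.S n := by
    intro n z
    by_contra hz
    obtain ⟨q, hpq, hy⟩ := step hN hfg hinj p z
    exact hz ((hmax hpq).1 n hy)
  refine ⟨{ app := fun n => ModuleCat.ofHom
              { toFun := fun z => p.g n ⟨z, htop n z⟩
                map_add' := fun a b => ?_
                map_smul' := fun r a => ?_ }
            naturality := fun {m n} h => ?_ }, ?_⟩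
  · show p.g n ⟨a + b, _⟩ = p.g n ⟨a, _⟩ + p.g n ⟨b, _⟩
    rw [← map_add]
    exact congrArg (p.g n) rfl
  · show p.g n ⟨r • a, _⟩ = r • p.g n ⟨a, _⟩
    rw [← map_smul]
    exact congrArg (p.g n) rfl
  · refine ModuleCat.hom_ext (LinearMap.ext fun x => ?_)
    exact p.nat h x (htop m x)
  · refine NatTrans.ext (funext fun n => ?_)
    refine ModuleCat.hom_ext (LinearMap.ext fun x => ?_)
    exact p.compat n x

/-- If `V` is injective, it is injective relative to finitely generated modules. -/
lemma fg_injective_of_injective (hN : EILocNoeth k) (hfg : EIFinGen k V)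
    (hV : Injective V) :
    Injective (⟨V, hfg⟩ : ObjectProperty.FullSubcategory (EIFinGen k)) := by
  constructor
  intro A B g u hu
  have fgK : EIFinGen k (kernel u.hom) :=
    hN A.obj _ (kernel.ι _) inferInstance A.property
  have hker : kernel.ι u.hom = 0 := by
    have := hu.right_cancellation
      (Z := (⟨kernel u.hom, fgK⟩ : ObjectProperty.FullSubcategory (EIFinGen k)))
      (ObjectProperty.homMk (kernel.ι u.hom)) (ObjectProperty.homMk 0) (by
        refine ObjectProperty.hom_ext _ ?_
        show kernel.ι u.hom ≫ u.hom = (0 : kernel u.hom ⟶ A.obj) ≫ u.hom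
        rw [kernel.condition, zero_comp])
    exact congrArg (fun t => t.hom) this
  haveI : Mono u.hom :=
    CategoryTheory.Abelian.mono_of_kernel_ι_eq_zero _ hker
  obtain ⟨h, hh⟩ := hV.factors g.hom u.hom
  exact ⟨ObjectProperty.homMk h, ObjectProperty.hom_ext _ hh⟩

end Main

end EIP

/-- **Corollary.** Let `k` be a commutative ring and `C` an EI category with object
set `ℕ` satisfying the standing conditions, locally Noetherian over `k`. A finitely
generated `C`-module `V` is injective in the category of all `C`-modules if and
only if it is injective in the full subcategory of finitely generated `C`-modules. -/
theorem EI.injective_iff_injective_fg [Category.{0} ℕ] (k : Type) [CommRing k]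
    (hC : EIStanding) (hN : EILocNoeth k)
    (V : ℕ ⥤ ModuleCat k) (hfg : EIFinGen k V) :
    Injective V ↔ Injective (⟨V, hfg⟩ : ObjectProperty.FullSubcategory (EIFinGen k)) := by
  exact ⟨fun h => EIP.fg_injective_of_injective hN hfg h,
    fun h => EIP.injective_of_fg_injective hN hfg h⟩
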